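/- arXiv:1904.11860 — 6 statements merged into one kernel-verified Lean document; each statement's English description precedes it below -/
import Mathlib

section
/- Let u, v ∈ ℝ² be nonzero vectors with ⟨u,v⟩ = ‖u‖‖v‖cos φ where cos φ ≠ 1, let r > 0, and define D(t) = 1 + cosh(t‖u‖/r)·cosh(t‖v‖/r) − sinh(t‖u‖/r)·sinh(t‖v‖/r)·cos φ. Then lim_{t→∞} (1/t)·2r·artanh(√(1 − 2/D(t))) = ‖u‖ + ‖v‖. -/
open Real Filter InnerProductSpace

/-- Inverse hyperbolic tangent. -/
noncomputable def artanh (x : ℝ) : ℝ := (1 / 2) * Real.log ((1 + x) / (1 - x))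

/-- Inverse hyperbolic cosine. -/
noncomputable def arcosh (x : ℝ) : ℝ := Real.log (x + Real.sqrt (x ^ 2 - 1))

private lemma exp_neg_tendsto {k : ℝ} (hk : 0 < k) :
    Tendsto (fun t : ℝ => Real.exp (-(t * k))) atTop (nhds 0) := by
  have h1 : Tendsto (fun t : ℝ => t * k) atTop atTop :=
    Tendsto.atTop_mul_const hk tendsto_id
  exact Real.tendsto_exp_atBot.comp (tendsto_neg_atTop_atBot.comp h1)

theorem hyperbolic_distance_linear_growth
    (u v : EuclideanSpace ℝ (Fin 2)) (hu : u ≠ 0) (hv : v ≠ 0)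
    (φ : ℝ) (huv : ⟪u, v⟫_ℝ = ‖u‖ * ‖v‖ * Real.cos φ) (hφ : Real.cos φ ≠ 1)
    (r : ℝ) (hr : 0 < r)
    (D : ℝ → ℝ)
    (hD : ∀ t, D t = 1 + Real.cosh (t * ‖u‖ / r) * Real.cosh (t * ‖v‖ / r)
            - Real.sinh (t * ‖u‖ / r) * Real.sinh (t * ‖v‖ / r) * Real.cos φ) :
    Tendsto (fun t => (1 / t) * (2 * r * _root_.artanh (Real.sqrt (1 - 2 / D t))))
      atTop (nhds (‖u‖ + ‖v‖)) := by
  have hu' : 0 < ‖u‖ := norm_pos_iff.mpr hu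
  have hv' : 0 < ‖v‖ := norm_pos_iff.mpr hv
  have hr' : r ≠ 0 := ne_of_gt hr
  have hc1 : Real.cos φ < 1 := lt_of_le_of_ne (Real.cos_le_one φ) hφ
  have hcm : -1 ≤ Real.cos φ := Real.neg_one_le_cos φ
  -- D t ≥ 2
  have hD2 : ∀ t, 2 ≤ D t := by
    intro t
    rw [hD]
    set α := t * ‖u‖ / r
    set β := t * ‖v‖ / r
    nlinarith [Real.cosh_add α β, Real.cosh_sub α β, Real.one_le_cosh (α + β),
      Real.one_le_cosh (α - β)]
  set x : ℝ → ℝ := fun t => Real.sqrt (1 - 2 / D t) with hxdef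
  -- key pointwise identity
  have key : ∀ t, 2 * r * _root_.artanh (x t)
      = r * (2 * Real.log (1 + x t) + Real.log (D t) - Real.log 2) := by
    intro t
    have hDpos : (0:ℝ) < D t := lt_of_lt_of_le two_pos (hD2 t)
    have hdiv : 2 / D t ≤ 1 := (div_le_one hDpos).mpr (hD2 t)
    have hdiv0 : 0 < 2 / D t := div_pos two_pos hDpos
    have h0 : 0 ≤ 1 - 2 / D t := by linarith
    have hx0 : 0 ≤ x t := Real.sqrt_nonneg _
    have hsq : x t ^ 2 = 1 - 2 / D t := Real.sq_sqrt h0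
    have hx1 : x t < 1 := by nlinarith
    have h1x : (0:ℝ) < 1 + x t := by linarith
    have h1x' : (0:ℝ) < 1 - x t := by linarith
    have hratio : (1 + x t) / (1 - x t) = (1 + x t) ^ 2 * D t / 2 := by
      rw [div_eq_div_iff (ne_of_gt h1x') (by norm_num : (2:ℝ) ≠ 0)]
      have h2 : (1 - x t) * (1 + x t) = 2 / D t := by linear_combination -hsq
      have := mul_pos h1x' h1x
      field_simp at h2
      nlinarith [h2]
    unfold _root_.artanh
    rw [hratio, show (1 + x t) ^ 2 * D t / 2 = (1 + x t) ^ 2 * D t / 2 from rfl,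
      Real.log_div (by positivity) (by norm_num),
      Real.log_mul (by positivity) (ne_of_gt hDpos), Real.log_pow]
    push_cast
    ring
  set S : ℝ := (‖u‖ + ‖v‖) / r with hS
  have hSpos : 0 < S := by positivity
  have hrS : r * S = ‖u‖ + ‖v‖ := by rw [hS]; field_simp
  set L : ℝ := (1 - Real.cos φ) / 4 with hL
  have hLpos : 0 < L := by rw [hL]; linarith
  -- the renormalized function E
  have hEeq : ∀ t, Real.exp (-(t * S)) * D t = Real.exp (-(t * S))
      + (1 - Real.cos φ) / 4 * (1 + Real.exp (-(t * (2 * S))))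
      + (1 + Real.cos φ) / 4 * (Real.exp (-(t * (2 * (‖v‖ / r))))
          + Real.exp (-(t * (2 * (‖u‖ / r))))) := by
    intro t
    have h1 : -(t * S) = -(t * ‖u‖ / r) + -(t * ‖v‖ / r) := by
      rw [hS]; field_simp; ring
    have h2 : -(t * (2 * S)) = (-(t * ‖u‖ / r) + -(t * ‖v‖ / r))
        + (-(t * ‖u‖ / r) + -(t * ‖v‖ / r)) := by rw [hS]; field_simp; ring
    have h3 : -(t * (2 * (‖v‖ / r))) = -(t * ‖v‖ / r) + -(t * ‖v‖ / r) := by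
      field_simp; ring
    have h4 : -(t * (2 * (‖u‖ / r))) = -(t * ‖u‖ / r) + -(t * ‖u‖ / r) := by
      field_simp; ring
    rw [hD t, h1, h2, h3, h4]
    simp only [Real.exp_add, Real.cosh_eq, Real.sinh_eq, Real.exp_neg]
    have hP := Real.exp_ne_zero (t * ‖u‖ / r)
    have hQ := Real.exp_ne_zero (t * ‖v‖ / r)
    field_simp
    ring
  have hElim : Tendsto (fun t => Real.exp (-(t * S)) * D t) atTop (nhds L) := by
    have heq : (fun t => Real.exp (-(t * S)) * D t) = fun t =>
        Real.exp (-(t * S))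
        + (1 - Real.cos φ) / 4 * (1 + Real.exp (-(t * (2 * S))))
        + (1 + Real.cos φ) / 4 * (Real.exp (-(t * (2 * (‖v‖ / r))))
            + Real.exp (-(t * (2 * (‖u‖ / r))))) := funext hEeq
    have hL' : L = 0 + (1 - Real.cos φ) / 4 * (1 + 0)
        + (1 + Real.cos φ) / 4 * (0 + 0) := by rw [hL]; ring
    rw [heq, hL']
    refine Tendsto.add (Tendsto.add (exp_neg_tendsto hSpos)
      (Tendsto.mul tendsto_const_nhds (Tendsto.add tendsto_const_nhds
        (exp_neg_tendsto (by positivity)))))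
      (Tendsto.mul tendsto_const_nhds (Tendsto.add
        (exp_neg_tendsto (by positivity)) (exp_neg_tendsto (by positivity))))
  have hinv : Tendsto (fun t : ℝ => 1 / t) atTop (nhds 0) := by
    simpa [one_div] using tendsto_inv_atTop_zero (𝕜 := ℝ)
  have hlogE : Tendsto (fun t => (1 / t) * (r * Real.log (Real.exp (-(t * S)) * D t)))
      atTop (nhds 0) := by
    have := hinv.mul ((hElim.log (ne_of_gt hLpos)).const_mul r)
    simpa using this
  -- the replacement function
  have hg : Tendsto (fun t => (1 / t) * (2 * r * Real.log (1 + x t))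
      + ((r * S + (1 / t) * (r * Real.log (Real.exp (-(t * S)) * D t)))
        + (1 / t) * (-(r * Real.log 2)))) atTop (nhds (‖u‖ + ‖v‖)) := by
    have h1 : Tendsto (fun t : ℝ => (1 / t) * (2 * r * Real.log (1 + x t)))
        atTop (nhds 0) := by
      apply squeeze_zero' (g := fun t : ℝ => (1 / t) * (2 * r * Real.log 2))
      · filter_upwards [eventually_gt_atTop (0:ℝ)] with t ht
        have hDpos : (0:ℝ) < D t := lt_of_lt_of_le two_pos (hD2 t)
        have hx0 : 0 ≤ x t := Real.sqrt_nonneg _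
        have : 0 ≤ Real.log (1 + x t) := Real.log_nonneg (by linarith)
        positivity
      · filter_upwards [eventually_gt_atTop (0:ℝ)] with t ht
        have hDpos : (0:ℝ) < D t := lt_of_lt_of_le two_pos (hD2 t)
        have hxle : x t ≤ 1 := by
          rw [hxdef]
          refine Real.sqrt_le_one.mpr ?_
          have : 0 < 2 / D t := div_pos two_pos hDpos
          linarith
        have hlog : Real.log (1 + x t) ≤ Real.log 2 := by
          apply Real.log_le_log (by positivity)
          linarith
        have h1t : 0 ≤ 1 / t := by positivity
        have h2r : 0 ≤ 2 * r := by positivity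
        exact mul_le_mul_of_nonneg_left (mul_le_mul_of_nonneg_left hlog h2r) h1t
      · simpa using hinv.mul_const (2 * r * Real.log 2)
    have h3 : Tendsto (fun t : ℝ => (1 / t) * (-(r * Real.log 2))) atTop (nhds 0) := by
      simpa using hinv.mul_const (-(r * Real.log 2))
    have h2 : Tendsto (fun t : ℝ => r * S
        + (1 / t) * (r * Real.log (Real.exp (-(t * S)) * D t))) atTop (nhds (r * S)) := by
      simpa using (tendsto_const_nhds (x := r * S)).add hlogE
    have hsum := h1.add (h2.add h3)
    have heq0 : (0:ℝ) + (r * S + 0) = ‖u‖ + ‖v‖ := by rw [hrS]; ring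
    rwa [heq0] at hsum
  refine hg.congr' ?_
  filter_upwards [eventually_gt_atTop (0:ℝ)] with t ht
  have hDpos : (0:ℝ) < D t := lt_of_lt_of_le two_pos (hD2 t)
  have hlm : Real.log (Real.exp (-(t * S)) * D t) = -(t * S) + Real.log (D t) := by
    rw [Real.log_mul (Real.exp_ne_zero _) (ne_of_gt hDpos), Real.log_exp]
  rw [hlm]
  rw [key t]
  field_simp
  ring
end

section
/- Let a, b > 0, c ∈ [−1, 1) with c ≠ 1, and define N(t) = (a − b·c)·cosh(tb)·sinh(ta) + (b − a·c)·cosh(ta)·sinh(tb) and D(t) = 1 + cosh(ta)·cosh(tb) − sinh(ta)·sinh(tb)·c. Then lim_{t→∞} N(t)/D(t) = a + b. -/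
open Real Filter

theorem lhopital_key_limit
    (a b c : ℝ) (ha : 0 < a) (hb : 0 < b) (hc : c ∈ Set.Icc (-1 : ℝ) 1) (hc1 : c ≠ 1)
    (N D : ℝ → ℝ)
    (hN : ∀ t, N t = (a - b * c) * Real.cosh (t * b) * Real.sinh (t * a)
            + (b - a * c) * Real.cosh (t * a) * Real.sinh (t * b))
    (hD : ∀ t, D t = 1 + Real.cosh (t * a) * Real.cosh (t * b)
            - Real.sinh (t * a) * Real.sinh (t * b) * c) :
    Tendsto (fun t => N t / D t) atTop (nhds (a + b)) := by
  have hclt : c < 1 := lt_of_le_of_ne hc.2 hc1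
  -- decaying exponentials
  have hexp : ∀ k : ℝ, 0 < k →
      Tendsto (fun t => Real.exp (-(k * t))) atTop (nhds 0) := by
    intro k hk
    have h1 : Tendsto (fun t : ℝ => k * t) atTop atTop :=
      Tendsto.const_mul_atTop hk tendsto_id
    have h2 : Tendsto (fun t : ℝ => -(k * t)) atTop atBot :=
      tendsto_neg_atBot_iff.mpr h1
    exact Real.tendsto_exp_atBot.comp h2
  set E1 : ℝ → ℝ := fun t => Real.exp (-(2 * a * t)) with hE1
  set E2 : ℝ → ℝ := fun t => Real.exp (-(2 * b * t)) with hE2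
  set E3 : ℝ → ℝ := fun t => Real.exp (-((a + b) * t)) with hE3
  have h1 : Tendsto E1 atTop (nhds 0) := hexp _ (by positivity)
  have h2 : Tendsto E2 atTop (nhds 0) := hexp _ (by positivity)
  have h3 : Tendsto E3 atTop (nhds 0) := hexp _ (by positivity)
  have hE3pos : ∀ t, 0 < E3 t := fun t => Real.exp_pos _
  -- closed forms
  have keyN : ∀ t, N t * E3 t =
      ((a - b*c) * (1 - E1 t + E2 t - E1 t * E2 t)
        + (b - a*c) * (1 + E1 t - E2 t - E1 t * E2 t)) / 4 := by
    intro t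
    have hxa : Real.exp (-(t*a)) = (Real.exp (t*a))⁻¹ := Real.exp_neg _
    have hxb : Real.exp (-(t*b)) = (Real.exp (t*b))⁻¹ := Real.exp_neg _
    have e1 : E1 t = (Real.exp (t*a))⁻¹ * (Real.exp (t*a))⁻¹ := by
      show Real.exp (-(2*a*t)) = _
      rw [show -(2*a*t) = -(t*a) + -(t*a) by ring, Real.exp_add, hxa]
    have e2 : E2 t = (Real.exp (t*b))⁻¹ * (Real.exp (t*b))⁻¹ := by
      show Real.exp (-(2*b*t)) = _
      rw [show -(2*b*t) = -(t*b) + -(t*b) by ring, Real.exp_add, hxb]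
    have e3 : E3 t = (Real.exp (t*a))⁻¹ * (Real.exp (t*b))⁻¹ := by
      show Real.exp (-((a+b)*t)) = _
      rw [show -((a+b)*t) = -(t*a) + -(t*b) by ring, Real.exp_add, hxa, hxb]
    rw [hN, Real.cosh_eq, Real.cosh_eq, Real.sinh_eq, Real.sinh_eq, hxa, hxb,
      e1, e2, e3]
    have hA := Real.exp_ne_zero (t*a)
    have hB := Real.exp_ne_zero (t*b)
    field_simp
    ring
  have keyD : ∀ t, D t * E3 t =
      E3 t + ((1 + E1 t + E2 t + E1 t * E2 t)
        - c * (1 - E1 t - E2 t + E1 t * E2 t)) / 4 := by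
    intro t
    have hxa : Real.exp (-(t*a)) = (Real.exp (t*a))⁻¹ := Real.exp_neg _
    have hxb : Real.exp (-(t*b)) = (Real.exp (t*b))⁻¹ := Real.exp_neg _
    have e1 : E1 t = (Real.exp (t*a))⁻¹ * (Real.exp (t*a))⁻¹ := by
      show Real.exp (-(2*a*t)) = _
      rw [show -(2*a*t) = -(t*a) + -(t*a) by ring, Real.exp_add, hxa]
    have e2 : E2 t = (Real.exp (t*b))⁻¹ * (Real.exp (t*b))⁻¹ := by
      show Real.exp (-(2*b*t)) = _
      rw [show -(2*b*t) = -(t*b) + -(t*b) by ring, Real.exp_add, hxb]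
    have e3 : E3 t = (Real.exp (t*a))⁻¹ * (Real.exp (t*b))⁻¹ := by
      show Real.exp (-((a+b)*t)) = _
      rw [show -((a+b)*t) = -(t*a) + -(t*b) by ring, Real.exp_add, hxa, hxb]
    rw [hD, Real.cosh_eq, Real.cosh_eq, Real.sinh_eq, Real.sinh_eq, hxa, hxb]
    rw [e1, e2, e3]
    have hA := Real.exp_ne_zero (t*a)
    have hB := Real.exp_ne_zero (t*b)
    field_simp
    ring
  -- limits of the products
  have hNe : Tendsto (fun t => N t * E3 t) atTop
      (nhds (((a - b*c) * 1 + (b - a*c) * 1) / 4)) := by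
    have : Tendsto (fun t =>
        ((a - b*c) * (1 - E1 t + E2 t - E1 t * E2 t)
          + (b - a*c) * (1 + E1 t - E2 t - E1 t * E2 t)) / 4) atTop
        (nhds (((a - b*c) * (1 - 0 + 0 - 0 * 0)
          + (b - a*c) * (1 + 0 - 0 - 0 * 0)) / 4)) := by
      apply Tendsto.div_const
      exact (((((tendsto_const_nhds.sub h1).add h2).sub (h1.mul h2)).const_mul _).add
        ((((tendsto_const_nhds.add h1).sub h2).sub (h1.mul h2)).const_mul _))
    simpa using (Tendsto.congr (fun t => (keyN t).symm) this)
  have hDe : Tendsto (fun t => D t * E3 t) atTop (nhds ((1 - c) / 4)) := by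
    have : Tendsto (fun t => E3 t + ((1 + E1 t + E2 t + E1 t * E2 t)
        - c * (1 - E1 t - E2 t + E1 t * E2 t)) / 4) atTop
        (nhds (0 + ((1 + 0 + 0 + 0 * 0) - c * (1 - 0 - 0 + 0 * 0)) / 4)) := by
      apply Tendsto.add h3
      apply Tendsto.div_const
      exact ((((tendsto_const_nhds.add h1).add h2).add (h1.mul h2)).sub
        ((((tendsto_const_nhds.sub h1).sub h2).add (h1.mul h2)).const_mul c))
    have heq : (0 + ((1 + 0 + 0 + 0 * 0) - c * (1 - 0 - 0 + 0 * 0)) / 4 : ℝ)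
        = (1 - c) / 4 := by ring
    rw [heq] at this
    exact Tendsto.congr (fun t => (keyD t).symm) this
  have hden : ((1 - c) / 4 : ℝ) ≠ 0 := by
    have : (0:ℝ) < 1 - c := by linarith
    positivity
  have := hNe.div hDe hden
  have heq2 : (((a - b*c) * 1 + (b - a*c) * 1) / 4) / ((1 - c) / 4) = a + b := by
    have h1c : (1 - c : ℝ) ≠ 0 := by
      intro h; apply hc1; linarith
    field_simp
    ring
  rw [heq2] at this
  refine this.congr (fun t => ?_)
  simp only [Pi.div_apply]
  rw [mul_div_mul_right _ _ (ne_of_gt (hE3pos t))]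
end

section
/- On the unit sphere S², the spherical distance formula reduces correctly in the flat limit: for fixed a, b ≥ 0 and φ ∈ ℝ, lim_{r→∞} r·arccos(cos(a/r)·cos(b/r) + sin(a/r)·sin(b/r)·cos φ) = √(a² + b² − 2ab·cos φ). -/
open Real Filter

private lemma sin_div_self_lim : Tendsto (fun x => Real.sin x / x) (nhdsWithin 0 {(0:ℝ)}ᶜ) (nhds 1) := by
  have h := (Real.hasDerivAt_sin 0)
  rw [hasDerivAt_iff_tendsto_slope] at h
  simp only [Real.cos_zero] at h
  refine h.congr fun y => ?_
  simp [slope_def_field, div_eq_div_iff]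

private lemma div_tendsto_zero (x : ℝ) : Tendsto (fun r : ℝ => x / r) atTop (nhds 0) := by
  simpa using tendsto_inv_atTop_zero.const_mul x |>.congr (fun r => by rw [div_eq_mul_inv])

private lemma L1 (x : ℝ) : Tendsto (fun r : ℝ => r * Real.sin (x / r)) atTop (nhds x) := by
  rcases eq_or_ne x 0 with rfl | hx
  · simpa using tendsto_const_nhds (x := (0:ℝ)) (f := atTop) |>.congr (fun r => by simp)
  · have h1 : Tendsto (fun r : ℝ => x / r) atTop (nhdsWithin 0 {(0:ℝ)}ᶜ) := by
      rw [tendsto_nhdsWithin_iff]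
      refine ⟨div_tendsto_zero x, ?_⟩
      filter_upwards [eventually_gt_atTop (0:ℝ)] with r hr
      exact div_ne_zero hx hr.ne'
    have h2 : Tendsto (fun r : ℝ => Real.sin (x / r) / (x / r) * x) atTop (nhds x) := by
      simpa using (sin_div_self_lim.comp h1).mul_const x
    refine h2.congr' ?_
    filter_upwards [eventually_gt_atTop (0:ℝ)] with r hr
    field_simp

private lemma L2 (x : ℝ) : Tendsto (fun r : ℝ => r^2 * (1 - Real.cos (x / r))) atTop (nhds (x^2/2)) := by
  have h : Tendsto (fun r : ℝ => 2 * (r * Real.sin ((x/2) / r))^2) atTop (nhds (x^2/2)) := by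
    have := ((L1 (x/2)).pow 2).const_mul 2
    convert this using 2
    ring
  refine h.congr fun r => ?_
  have hs : Real.sin ((x/r)/2) ^ 2 = 1/2 - Real.cos (2*((x/r)/2)) / 2 := Real.sin_sq_eq_half_sub _
  rw [show 2*((x/r)/2) = x/r by ring] at hs
  have : (x/2)/r = (x/r)/2 := by ring
  rw [this]
  nlinarith [hs]

private lemma psi_lim : Tendsto (fun θ : ℝ => θ / Real.sin (θ/2)) (nhdsWithin 0 (Set.Ioi 0)) (nhds 2) := by
  have h1 : Tendsto (fun θ : ℝ => θ/2) (nhdsWithin 0 (Set.Ioi 0)) (nhdsWithin 0 {(0:ℝ)}ᶜ) := by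
    rw [tendsto_nhdsWithin_iff]
    constructor
    · have : Tendsto (fun θ : ℝ => θ/2) (nhds 0) (nhds 0) := by
        simpa using (continuous_id.div_const 2).tendsto (0:ℝ)
      exact this.mono_left nhdsWithin_le_nhds
    · filter_upwards [self_mem_nhdsWithin] with θ (hθ : (0:ℝ) < θ)
      simp only [Set.mem_compl_iff, Set.mem_singleton_iff]
      positivity
  have h2 : Tendsto (fun θ : ℝ => 2 / (Real.sin (θ/2) / (θ/2))) (nhdsWithin 0 (Set.Ioi 0)) (nhds 2) := by
    simpa [Function.comp_def, Pi.div_def] using (tendsto_const_nhds (x := (2:ℝ))).div (sin_div_self_lim.comp h1) one_ne_zero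
  refine h2.congr' ?_
  filter_upwards [self_mem_nhdsWithin] with θ (hθ : (0:ℝ) < θ)
  rcases eq_or_ne (Real.sin (θ/2)) 0 with hs | hs
  · simp [hs]
  · field_simp

theorem spherical_flat_limit (a b φ : ℝ) (ha : 0 ≤ a) (hb : 0 ≤ b) :
    Tendsto (fun r : ℝ =>
        r * Real.arccos (Real.cos (a / r) * Real.cos (b / r)
          + Real.sin (a / r) * Real.sin (b / r) * Real.cos φ))
      atTop (nhds (Real.sqrt (a ^ 2 + b ^ 2 - 2 * a * b * Real.cos φ))) := by
  set c2 : ℝ := a ^ 2 + b ^ 2 - 2 * a * b * Real.cos φ with hc2def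
  have hcos1 : Real.cos φ ≤ 1 := Real.cos_le_one φ
  have hcosm1 : -1 ≤ Real.cos φ := Real.neg_one_le_cos φ
  have hc2nn : 0 ≤ c2 := by nlinarith [sq_nonneg (a - b), mul_nonneg ha hb]
  set g : ℝ → ℝ := fun r => Real.cos (a / r) * Real.cos (b / r)
          + Real.sin (a / r) * Real.sin (b / r) * Real.cos φ with hgdef
  clear_value g
  rcases eq_or_lt_of_le hc2nn with hc2 | hc2
  · -- degenerate case: c2 = 0, g ≡ 1
    have hab : a = b := by nlinarith [sq_nonneg (a - b), mul_nonneg ha hb]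
    subst hab
    have haφ : a * a * (1 - Real.cos φ) = 0 := by nlinarith
    have hg1 : ∀ r : ℝ, g r = 1 := by
      intro r
      simp only [hgdef]
      rcases mul_eq_zero.1 haφ with h | h
      · rcases mul_eq_zero.1 h with rfl | rfl
        · simp [hgdef, Real.sin_sq_add_cos_sq]
        · simp [hgdef, Real.sin_sq_add_cos_sq]
      · have : Real.cos φ = 1 := by linarith
        rw [this]
        nlinarith [Real.sin_sq_add_cos_sq (a / r)]
    rw [← hc2]
    simp only [Real.sqrt_zero]
    refine tendsto_const_nhds.congr fun r => ?_
    have := hg1 r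
    simp only [hgdef] at this
    rw [this, Real.arccos_one, mul_zero]
  · -- main case c2 > 0
    have hgbd : ∀ r : ℝ, -1 ≤ g r ∧ g r ≤ 1 := by
      intro r
      simp only [hgdef]
      have h1 := Real.sin_sq_add_cos_sq (a / r)
      have h2 := Real.sin_sq_add_cos_sq (b / r)
      rcases le_or_gt 0 (Real.sin (a/r) * Real.sin (b/r)) with hs | hs
      · constructor
        · nlinarith [sq_nonneg (Real.sin (a/r) - Real.sin (b/r)), sq_nonneg (Real.cos (a/r) + Real.cos (b/r)), mul_nonneg hs (show (0:ℝ) ≤ 1 + Real.cos φ by linarith)]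
        · nlinarith [sq_nonneg (Real.sin (a/r) - Real.sin (b/r)), sq_nonneg (Real.cos (a/r) - Real.cos (b/r)), mul_nonneg hs (show (0:ℝ) ≤ 1 - Real.cos φ by linarith)]
      · constructor
        · nlinarith [sq_nonneg (Real.sin (a/r) + Real.sin (b/r)), sq_nonneg (Real.cos (a/r) + Real.cos (b/r)), mul_nonneg (show (0:ℝ) ≤ -(Real.sin (a/r) * Real.sin (b/r)) by linarith) (show (0:ℝ) ≤ 1 - Real.cos φ by linarith)]
        · nlinarith [sq_nonneg (Real.sin (a/r) + Real.sin (b/r)), sq_nonneg (Real.cos (a/r) - Real.cos (b/r)), mul_nonneg (show (0:ℝ) ≤ -(Real.sin (a/r) * Real.sin (b/r)) by linarith) (show (0:ℝ) ≤ 1 + Real.cos φ by linarith)]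
    -- limit of r^2 (1 - g r)
    have hcosA : Tendsto (fun r : ℝ => Real.cos (a / r)) atTop (nhds 1) := by
      have := (Real.continuous_cos.tendsto 0).comp (div_tendsto_zero a)
      simpa [Function.comp_def] using this
    have T1 : Tendsto (fun r : ℝ => r^2 * (1 - g r)) atTop (nhds (c2/2)) := by
      have h := ((L2 a).add (hcosA.mul (L2 b))).sub (((L1 a).mul (L1 b)).mul_const (Real.cos φ))
      have heq : a^2/2 + 1 * (b^2/2) - a * b * Real.cos φ = c2/2 := by rw [hc2def]; ring
      rw [heq] at h
      refine h.congr fun r => ?_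
      simp only [hgdef]
      ring
    have hev : ∀ᶠ r : ℝ in atTop, 0 < r ∧ g r < 1 := by
      have hpos : ∀ᶠ r : ℝ in atTop, c2/4 < r^2 * (1 - g r) :=
        T1.eventually (eventually_gt_nhds (by linarith))
      filter_upwards [hpos, eventually_gt_atTop (0:ℝ)] with r h1 h2
      refine ⟨h2, ?_⟩
      by_contra hcon
      push_neg at hcon
      nlinarith [mul_nonneg (sq_nonneg r) (show (0:ℝ) ≤ g r - 1 by linarith)]
    set θ : ℝ → ℝ := fun r => Real.arccos (g r) with hθdef
    have hg1 : Tendsto g atTop (nhds 1) := by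
      have hsinA : Tendsto (fun r : ℝ => Real.sin (a / r)) atTop (nhds 0) := by
        simpa [Function.comp_def] using (Real.continuous_sin.tendsto 0).comp (div_tendsto_zero a)
      have hsinB : Tendsto (fun r : ℝ => Real.sin (b / r)) atTop (nhds 0) := by
        simpa [Function.comp_def] using (Real.continuous_sin.tendsto 0).comp (div_tendsto_zero b)
      have hcosB : Tendsto (fun r : ℝ => Real.cos (b / r)) atTop (nhds 1) := by
        simpa [Function.comp_def] using (Real.continuous_cos.tendsto 0).comp (div_tendsto_zero b)
      have := (hcosA.mul hcosB).add ((hsinA.mul hsinB).mul_const (Real.cos φ))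
      rw [hgdef]
      simpa using this
    have hθ0 : Tendsto θ atTop (nhdsWithin 0 (Set.Ioi 0)) := by
      rw [tendsto_nhdsWithin_iff]
      constructor
      · have := (Real.continuous_arccos.tendsto 1).comp hg1
        simpa [hθdef, Real.arccos_one, Function.comp_def] using this
      · filter_upwards [hev] with r hr
        exact Real.arccos_pos.2 hr.2
    have A : Tendsto (fun r => θ r / Real.sin (θ r / 2)) atTop (nhds 2) := psi_lim.comp hθ0
    have B : Tendsto (fun r => r * Real.sin (θ r / 2)) atTop (nhds (Real.sqrt c2 / 2)) := by
      have hlim : Tendsto (fun r : ℝ => Real.sqrt (r^2 * (1 - g r) / 2)) atTop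
          (nhds (Real.sqrt c2 / 2)) := by
        have h := (Real.continuous_sqrt.tendsto (c2/2/2)).comp (T1.div_const 2)
        have h4 : Real.sqrt (c2/2/2) = Real.sqrt c2 / 2 := by
          rw [show c2/2/2 = c2/4 by ring, Real.sqrt_div hc2nn,
            show Real.sqrt 4 = 2 by
              rw [show (4:ℝ) = 2^2 by norm_num, Real.sqrt_sq (by norm_num : (0:ℝ) ≤ 2)]]
        rw [← h4]
        exact h
      refine hlim.congr' ?_
      filter_upwards [eventually_gt_atTop (0:ℝ)] with r hr
      have hb1 := (hgbd r).1
      have hb2 := (hgbd r).2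
      have hcosθ : Real.cos (θ r) = g r := Real.cos_arccos hb1 hb2
      have hsq : Real.sin (θ r / 2) ^ 2 = (1 - g r) / 2 := by
        rw [Real.sin_sq_eq_half_sub, show 2 * (θ r / 2) = θ r by ring, hcosθ]; ring
      have hsnn : 0 ≤ Real.sin (θ r / 2) := by
        apply Real.sin_nonneg_of_nonneg_of_le_pi
        · have := Real.arccos_nonneg (g r); rw [hθdef]; positivity
        · have h1 := Real.arccos_le_pi (g r)
          have : θ r / 2 ≤ π / 2 := by rw [hθdef]; linarith
          linarith [Real.pi_pos]
      have : Real.sin (θ r / 2) = Real.sqrt ((1 - g r) / 2) := by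
        rw [← hsq, Real.sqrt_sq hsnn]
      rw [this, show r^2 * (1 - g r)/2 = r^2 * ((1 - g r)/2) by ring,
        Real.sqrt_mul (sq_nonneg r), Real.sqrt_sq hr.le]
    have hfinal := A.mul B
    rw [show (2:ℝ) * (Real.sqrt c2 / 2) = Real.sqrt c2 by ring] at hfinal
    refine hfinal.congr' ?_
    filter_upwards [hev] with r hr
    have hθpos : 0 < θ r := Real.arccos_pos.2 hr.2
    have hθle : θ r ≤ π := Real.arccos_le_pi (g r)
    have hspos : 0 < Real.sin (θ r / 2) := by
      apply Real.sin_pos_of_pos_of_lt_pi (by linarith)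
      linarith [Real.pi_pos]
    have hs := hspos.ne'
    have key : θ r / Real.sin (θ r / 2) * (r * Real.sin (θ r / 2)) = r * θ r := by
      field_simp
    rw [key]
    simp only [hθdef, hgdef]
end

section
/- In the flat limit the hyperbolic distance formula also recovers the Euclidean one: for fixed a, b ≥ 0 and φ ∈ ℝ, lim_{r→∞} 2r·artanh(√(1 − 2/D_r)) = √(a² + b² − 2ab·cos φ), where D_r = 1 + cosh(a/r)·cosh(b/r) − sinh(a/r)·sinh(b/r)·cos φ. -/
open Real Filter

open Topology in
private lemma sinh_slope (k : ℝ) :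
    Tendsto (fun x : ℝ => Real.sinh (k * x) / x) (𝓝[≠] (0:ℝ)) (𝓝 k) := by
  have h1 : HasDerivAt (fun x : ℝ => k * x) k 0 := by
    simpa using (hasDerivAt_id (0:ℝ)).const_mul k
  have hd : HasDerivAt (fun x : ℝ => Real.sinh (k * x)) k 0 := by
    simpa [Function.comp_def] using (Real.hasDerivAt_sinh (k * 0)).comp 0 h1
  have h := hasDerivAt_iff_tendsto_slope.mp hd
  refine h.congr fun x => ?_
  simp [slope_fun_def_field, mul_zero, Real.sinh_zero]

private lemma artanh_cosh (d : ℝ) (hd : 2 < d) :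
    Real.cosh (2 * _root_.artanh (Real.sqrt (1 - 2 / d))) = d - 1 ∧
      0 < 2 * _root_.artanh (Real.sqrt (1 - 2 / d)) := by
  have hd0 : (0:ℝ) < d := by linarith
  have h1 : 0 < 1 - 2 / d := by
    rw [sub_pos, div_lt_one hd0]; linarith
  set u := Real.sqrt (1 - 2 / d) with hu
  have hu0 : 0 < u := Real.sqrt_pos.mpr h1
  have hu2 : u ^ 2 = 1 - 2 / d := Real.sq_sqrt h1.le
  have hu2lt : u ^ 2 < 1 := by
    rw [hu2]; have : 0 < 2 / d := by positivity
    linarith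
  have hu1 : u < 1 := by nlinarith
  have hy : 1 < (1 + u) / (1 - u) := by
    rw [one_lt_div (by linarith)]; linarith
  have hy0 : 0 < (1 + u) / (1 - u) := by linarith
  have hart : 2 * _root_.artanh u = Real.log ((1 + u) / (1 - u)) := by
    rw [_root_.artanh]; ring
  constructor
  · rw [hart, Real.cosh_eq, Real.exp_log hy0, Real.exp_neg, Real.exp_log hy0, inv_div]
    have h1u : (1 - u) ≠ 0 := by linarith
    have h1u' : (1 + u) ≠ 0 := by linarith
    have hdu : d * u ^ 2 = d - 2 := by rw [hu2]; field_simp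
    field_simp
    linear_combination 2 * hdu
  · have : 0 < Real.log ((1 + u) / (1 - u)) := Real.log_pos hy
    rw [hart] at *
    linarith

private noncomputable def Dd (a b φ x : ℝ) : ℝ :=
  1 + Real.cosh (a*x) * Real.cosh (b*x) - Real.sinh (a*x) * Real.sinh (b*x) * Real.cos φ

private noncomputable def Ff (a b φ x : ℝ) : ℝ :=
  2 * _root_.artanh (Real.sqrt (1 - 2 / Dd a b φ x))

open Topology in
private lemma core (a b φ : ℝ) (ha : 0 ≤ a) (hb : 0 ≤ b) :
    Tendsto (fun x : ℝ => Ff a b φ x / x) (𝓝[>] (0:ℝ))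
      (𝓝 (Real.sqrt (a ^ 2 + b ^ 2 - 2 * a * b * Real.cos φ))) := by
  have hcos : Real.cos φ ≤ 1 := Real.cos_le_one φ
  have hDid : ∀ x : ℝ, Dd a b φ x - 2 =
      2 * Real.sinh (((a-b)/2) * x) ^ 2
        + Real.sinh (a*x) * Real.sinh (b*x) * (1 - Real.cos φ) := by
    intro x
    have h1 : Real.cosh ((a-b)*x) =
        Real.cosh (a*x) * Real.cosh (b*x) - Real.sinh (a*x) * Real.sinh (b*x) := by
      rw [show (a-b)*x = a*x - b*x by ring, Real.cosh_sub]
    have h2 : Real.cosh ((a-b)*x) = 2 * Real.sinh (((a-b)/2) * x) ^ 2 + 1 := by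
      rw [show (a-b)*x = 2*(((a-b)/2)*x) by ring, Real.cosh_two_mul, Real.cosh_sq]
      ring
    rw [Dd]
    linear_combination h2 - h1
  by_cases hc : a ^ 2 + b ^ 2 - 2 * a * b * Real.cos φ = 0
  · -- degenerate case: D ≡ 2 and F ≡ 0
    have hab : a = b := by nlinarith [sq_nonneg (a - b), mul_nonneg (mul_nonneg ha hb) (by linarith : (0:ℝ) ≤ 1 - Real.cos φ)]
    have hmul : a * b * (1 - Real.cos φ) = 0 := by nlinarith [sq_nonneg (a - b)]
    have hDx : ∀ x : ℝ, Dd a b φ x = 2 := by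
      intro x
      have h := hDid x
      have h1 : Real.sinh (((a-b)/2) * x) = 0 := by
        rw [hab]; simp
      have h2 : Real.sinh (a*x) * Real.sinh (b*x) * (1 - Real.cos φ) = 0 := by
        rcases mul_eq_zero.mp hmul with h' | h'
        · rcases mul_eq_zero.mp h' with h'' | h''
          · rw [h'', zero_mul, Real.sinh_zero]; ring
          · rw [h'', zero_mul, Real.sinh_zero]; ring
        · rw [h']; ring
      nlinarith [h, h1, h2]
    have hFx : ∀ x : ℝ, Ff a b φ x = 0 := by
      intro x
      rw [Ff, hDx x]
      norm_num [_root_.artanh]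
    rw [hc, Real.sqrt_zero]
    refine tendsto_const_nhds.congr fun x => ?_
    rw [hFx x, zero_div]
  · have hcpos : 0 < a ^ 2 + b ^ 2 - 2 * a * b * Real.cos φ := by
      rcases lt_or_eq_of_le (by nlinarith [sq_nonneg (a-b), mul_nonneg (mul_nonneg ha hb) (by linarith : (0:ℝ) ≤ 1 - Real.cos φ)] : (0:ℝ) ≤ a ^ 2 + b ^ 2 - 2 * a * b * Real.cos φ) with h | h
      · exact h
      · exact absurd h.symm hc
    -- D x > 2 for x > 0
    have hD2 : ∀ x : ℝ, 0 < x → 2 < Dd a b φ x := by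
      intro x hx
      have h := hDid x
      have hterm2 : 0 ≤ Real.sinh (a*x) * Real.sinh (b*x) * (1 - Real.cos φ) :=
        mul_nonneg (mul_nonneg (Real.sinh_nonneg_iff.mpr (mul_nonneg ha hx.le))
          (Real.sinh_nonneg_iff.mpr (mul_nonneg hb hx.le))) (by linarith)
      by_cases hab : a = b
      · have habpos : 0 < a * b * (1 - Real.cos φ) := by nlinarith [sq_nonneg (a-b)]
        have hφ : 0 < 1 - Real.cos φ := by
          rcases lt_or_eq_of_le (by linarith : (0:ℝ) ≤ 1 - Real.cos φ) with h' | h'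
          · exact h'
          · exfalso; rw [← h', mul_zero] at habpos; exact lt_irrefl 0 habpos
        have hab2 : 0 < a * b := by nlinarith [mul_nonneg ha hb]
        have ha' : 0 < a := by nlinarith [hab2, hb]
        have hb' : 0 < b := by nlinarith [hab2, ha]
        have hs : 0 < Real.sinh (a*x) * Real.sinh (b*x) * (1 - Real.cos φ) :=
          mul_pos (mul_pos (Real.sinh_pos_iff.mpr (mul_pos ha' hx))
            (Real.sinh_pos_iff.mpr (mul_pos hb' hx))) hφ
        nlinarith [sq_nonneg (Real.sinh (((a-b)/2) * x))]
      · have hne : ((a-b)/2) * x ≠ 0 := by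
          refine mul_ne_zero ?_ (ne_of_gt hx)
          intro h'
          exact hab (by linarith [div_eq_zero_iff.mp h'] : a = b)
        have hs : 0 < Real.sinh (((a-b)/2) * x) ^ 2 := by
          have := Real.sinh_ne_zero.mpr hne
          positivity
        nlinarith
    set c2 := a ^ 2 + b ^ 2 - 2 * a * b * Real.cos φ with hc2
    -- key pointwise facts
    have hkey : ∀ x : ℝ, 0 < x →
        Real.cosh (Ff a b φ x) = Dd a b φ x - 1 ∧ 0 < Ff a b φ x := by
      intro x hx
      exact artanh_cosh (Dd a b φ x) (hD2 x hx)
    have hsinh : ∀ x : ℝ, 0 < x →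
        Real.sinh (Ff a b φ x / 2) ^ 2 = (Dd a b φ x - 2) / 2 := by
      intro x hx
      have h := (hkey x hx).1
      have h2 : Real.cosh (Ff a b φ x) = 2 * Real.sinh (Ff a b φ x / 2) ^ 2 + 1 := by
        have h3 := Real.cosh_two_mul (Ff a b φ x / 2)
        rw [Real.cosh_sq, show 2 * (Ff a b φ x / 2) = Ff a b φ x by ring] at h3
        rw [h3]; ring
      rw [h2] at h
      linarith
    have hx_ev : ∀ᶠ x in 𝓝[>] (0:ℝ), 0 < x := eventually_mem_nhdsWithin
    -- continuity of D; D → 2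
    have hDcont : Continuous (Dd a b φ) := by
      unfold Dd; fun_prop
    have hD0 : Tendsto (Dd a b φ) (𝓝[>] (0:ℝ)) (𝓝 2) := by
      have h : Tendsto (Dd a b φ) (𝓝[>] (0:ℝ)) (𝓝 (Dd a b φ 0)) :=
        (hDcont.tendsto 0).mono_left nhdsWithin_le_nhds
      have h2 : Dd a b φ 0 = 2 := by norm_num [Dd]
      rwa [h2] at h
    -- F → 0 within Ioi 0
    have hFbound : ∀ x : ℝ, 0 < x → Ff a b φ x ≤ 2 * Real.sqrt ((Dd a b φ x - 2) / 2) := by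
      intro x hx
      have hF := (hkey x hx).2
      have h1 : Ff a b φ x / 2 < Real.sinh (Ff a b φ x / 2) :=
        Real.self_lt_sinh_iff.mpr (by linarith)
      have h2 : Real.sinh (Ff a b φ x / 2) = Real.sqrt ((Dd a b φ x - 2) / 2) := by
        rw [← hsinh x hx, Real.sqrt_sq (by positivity : 0 ≤ Real.sinh (Ff a b φ x / 2))]
      linarith [h2 ▸ h1]
    have hbnd : Tendsto (fun x => 2 * Real.sqrt ((Dd a b φ x - 2) / 2)) (𝓝[>] (0:ℝ)) (𝓝 0) := by
      have hcont : Continuous (fun y : ℝ => 2 * Real.sqrt ((y - 2) / 2)) := by fun_prop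
      have := (hcont.tendsto 2).comp hD0
      simpa [Function.comp_def] using this
    have hF0 : Tendsto (Ff a b φ) (𝓝[>] (0:ℝ)) (𝓝 0) := by
      refine tendsto_of_tendsto_of_tendsto_of_le_of_le' tendsto_const_nhds hbnd ?_ ?_
      · exact hx_ev.mono fun x hx => (hkey x hx).2.le
      · exact hx_ev.mono fun x hx => hFbound x hx
    have hFpos : ∀ᶠ x in 𝓝[>] (0:ℝ), 0 < Ff a b φ x :=
      hx_ev.mono fun x hx => (hkey x hx).2
    have hF0' : Tendsto (Ff a b φ) (𝓝[>] (0:ℝ)) (𝓝[>] (0:ℝ)) :=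
      tendsto_nhdsWithin_iff.mpr ⟨hF0, hFpos⟩
    have hsub : 𝓝[>] (0:ℝ) ≤ 𝓝[≠] (0:ℝ) :=
      nhdsWithin_mono 0 fun y hy => Set.mem_compl_singleton_iff.mpr (ne_of_gt hy)
    -- limit sinh(y/2)/(y/2) → 1
    have base : Tendsto (fun y : ℝ => Real.sinh (y/2) / (y/2)) (𝓝[≠] (0:ℝ)) (𝓝 1) := by
      have h := (sinh_slope (2⁻¹ : ℝ)).const_mul (2:ℝ)
      rw [show (2:ℝ) * 2⁻¹ = 1 by norm_num] at h
      refine h.congr fun y => ?_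
      rw [show (2:ℝ)⁻¹ * y = y / 2 by ring, div_div_eq_mul_div]
      ring
    have L2 : Tendsto (fun x => Real.sinh (Ff a b φ x / 2) / (Ff a b φ x / 2))
        (𝓝[>] (0:ℝ)) (𝓝 1) :=
      base.comp (hF0'.mono_right hsub)
    have L2' : Tendsto (fun x => (Ff a b φ x / 2) / Real.sinh (Ff a b φ x / 2))
        (𝓝[>] (0:ℝ)) (𝓝 1) := by
      have h := L2.inv₀ one_ne_zero
      rw [inv_one] at h
      exact h.congr fun x => inv_div _ _
    -- limit (D x - 2)/x² → c2/2
    have Lsa := (sinh_slope a).mono_left hsub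
    have Lsb := (sinh_slope b).mono_left hsub
    have Lsab := (sinh_slope ((a-b)/2)).mono_left hsub
    have L3 : Tendsto (fun x => (Dd a b φ x - 2) / x ^ 2) (𝓝[>] (0:ℝ)) (𝓝 (c2 / 2)) := by
      have h : Tendsto (fun x => 2 * (Real.sinh (((a-b)/2) * x) / x) ^ 2
          + (Real.sinh (a*x) / x) * (Real.sinh (b*x) / x) * (1 - Real.cos φ))
          (𝓝[>] (0:ℝ)) (𝓝 (2 * ((a-b)/2) ^ 2 + a * b * (1 - Real.cos φ))) := by
        exact (((Lsab.pow 2).const_mul 2).add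
          (((Lsa.mul Lsb)).mul_const (1 - Real.cos φ)))
      have hval : 2 * ((a-b)/2) ^ 2 + a * b * (1 - Real.cos φ) = c2 / 2 := by
        rw [hc2]; ring
      rw [hval] at h
      refine h.congr' (hx_ev.mono fun x hx => ?_)
      have hx0 : x ≠ 0 := ne_of_gt hx
      beta_reduce
      rw [hDid x]
      field_simp
    -- (F x / x)² → c2
    have Lsq : Tendsto (fun x => (Ff a b φ x / x) ^ 2) (𝓝[>] (0:ℝ)) (𝓝 c2) := by
      have h : Tendsto (fun x => 2 * ((Ff a b φ x / 2) / Real.sinh (Ff a b φ x / 2)) ^ 2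
          * ((Dd a b φ x - 2) / x ^ 2)) (𝓝[>] (0:ℝ)) (𝓝 (2 * 1 ^ 2 * (c2 / 2))) :=
        ((L2'.pow 2).const_mul 2).mul L3
      rw [show (2:ℝ) * 1 ^ 2 * (c2 / 2) = c2 by ring] at h
      refine h.congr' (hx_ev.mono fun x hx => ?_)
      have hx0 : x ≠ 0 := ne_of_gt hx
      have hF := (hkey x hx).2
      have hs2 := hsinh x hx
      have hsne : Real.sinh (Ff a b φ x / 2) ≠ 0 :=
        ne_of_gt (Real.sinh_pos_iff.mpr (by linarith))
      have hDne : Dd a b φ x - 2 ≠ 0 := ne_of_gt (by linarith [hD2 x hx])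
      beta_reduce
      rw [div_pow, div_pow, hs2, div_pow]
      field_simp
    -- conclude via sqrt
    have := (Real.continuous_sqrt.tendsto c2).comp Lsq
    refine this.congr' (hx_ev.mono fun x hx => ?_)
    have h1 : 0 ≤ Ff a b φ x / x := div_nonneg (hkey x hx).2.le hx.le
    simp only [Function.comp]
    rw [Real.sqrt_sq h1]

theorem hyperbolic_flat_limit (a b φ : ℝ) (ha : 0 ≤ a) (hb : 0 ≤ b) :
    Tendsto (fun r : ℝ =>
        2 * r * _root_.artanh (Real.sqrt (1 - 2 /
          (1 + Real.cosh (a / r) * Real.cosh (b / r)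
             - Real.sinh (a / r) * Real.sinh (b / r) * Real.cos φ))))
      atTop (nhds (Real.sqrt (a ^ 2 + b ^ 2 - 2 * a * b * Real.cos φ))) := by
  have hcomp := (core a b φ ha hb).comp tendsto_inv_atTop_nhdsGT_zero
  refine hcomp.congr' ?_
  filter_upwards [eventually_gt_atTop (0:ℝ)] with r hr
  simp only [Function.comp, Ff, Dd, ← div_eq_mul_inv]
  rw [div_eq_mul_inv, inv_inv]
  ring
end

section
/- The squared hyperbolic distance admits the second-order expansion consistent with Lemma (Taylor): for unit vectors u, v ∈ ℝ² with angle φ and curvature k = −1 (r = 1), writing d(t) = 2·artanh(√(1 − 2/D(t))) with D(t) = 1 + cosh(ta)·cosh(tb) − sinh(ta)·sinh(tb)·cos φ where a = ‖u‖, b = ‖v‖, one has d(t)² = t²(a² + b² − 2ab cos φ) + (1/3)·t⁴·a²b²·sin²φ + o(t⁴) as t → 0. -/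
open Real Filter Asymptotics InnerProductSpace

theorem my_arsinh_deriv_bound (y : ℝ) :
    |(Real.sqrt (1+y^2))⁻¹ - (1 - y^2/2)| ≤ (3/8)*y^4 := by
  set w := Real.sqrt (1+y^2) with hw
  have hpos : (0:ℝ) < 1 + y^2 := by positivity
  have hw2 : w^2 = 1 + y^2 := Real.sq_sqrt hpos.le
  have hwnn : 0 ≤ w := Real.sqrt_nonneg _
  have hw1 : 1 ≤ w := by nlinarith [sq_nonneg y]
  have hwpos : 0 < w := lt_of_lt_of_le one_pos hw1
  have hy2 : y^2 = w^2 - 1 := by linarith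
  have hy4 : y^4 = (w^2-1)^2 := by rw [show y^4 = (y^2)^2 by ring, hy2]
  have hid : (w)⁻¹ - (1 - y^2/2) = y^4*(2+w)/(2*w*(1+w)^2) := by
    rw [hy2, hy4]; field_simp; ring
  rw [hid, abs_of_nonneg (by positivity)]
  rw [div_le_iff₀ (by positivity)]
  have h4 : (0:ℝ) ≤ y^4 := by positivity
  have hkey : 2+w ≤ (3/4)*(w*(1+w)^2) := by
    nlinarith [mul_nonneg (sub_nonneg.mpr hw1) (sq_nonneg w), sq_nonneg (w-1)]
  nlinarith [mul_le_mul_of_nonneg_left hkey h4]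

theorem my_arsinh_remainder (x : ℝ) :
    |Real.arsinh x - (x - x^3/6)| ≤ (3/8)*|x|^4 * |x| := by
  set f : ℝ → ℝ := fun y => Real.arsinh y - (y - y^3/6) with hf
  set f' : ℝ → ℝ := fun y => (Real.sqrt (1+y^2))⁻¹ - (1 - y^2/2) with hf'
  have hderiv : ∀ y : ℝ, HasDerivAt f (f' y) y := by
    intro y
    exact (Real.hasDerivAt_arsinh y).sub
      (((hasDerivAt_id y).sub (((hasDerivAt_pow 3 y)).div_const 6)).congr_deriv (by
        simp; ring))
  have key := Convex.norm_image_sub_le_of_norm_hasDerivWithin_le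
    (f := f) (f' := f') (s := Set.Icc (-|x|) |x|) (C := (3/8)*|x|^4)
    (fun y _ => (hderiv y).hasDerivWithinAt)
    (fun y hy => by
      have h1 : |y| ≤ |x| := abs_le.mpr ⟨hy.1, hy.2⟩
      have := my_arsinh_deriv_bound y
      have h2 : y^4 ≤ |x|^4 := by
        calc y^4 = |y|^4 := by rw [pow_abs, abs_of_nonneg (by positivity : (0:ℝ) ≤ y^4)]
        _ ≤ |x|^4 := by gcongr
      simp only [Real.norm_eq_abs]
      nlinarith [abs_nonneg ((Real.sqrt (1+y^2))⁻¹ - (1 - y^2/2))])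
    (convex_Icc _ _)
    (Set.mem_Icc.mpr ⟨neg_nonpos.mpr (abs_nonneg x), abs_nonneg x⟩)
    (Set.mem_Icc.mpr ⟨neg_abs_le x, le_abs_self x⟩)
  simpa [hf, Real.norm_eq_abs] using key

theorem my_sinh_remainder {x : ℝ} (hx : |x| ≤ 1) :
    |Real.sinh x - (x + x^3/6)| ≤ |x|^5 := by
  have h1 := Real.exp_bound hx (by norm_num : 0 < 5)
  have hx' : |(-x)| ≤ 1 := by rwa [abs_neg]
  have h2 := Real.exp_bound hx' (by norm_num : 0 < 5)
  rw [abs_neg] at h2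
  simp only [Finset.sum_range_succ, Finset.sum_range_zero] at h1 h2
  norm_num [Nat.factorial] at h1 h2
  rw [Real.sinh_eq]
  have e1 := abs_le.mp h1
  have e2 := abs_le.mp h2
  rw [abs_le]
  constructor <;> [nlinarith [abs_nonneg x]; nlinarith [abs_nonneg x]]

theorem my_sinh_isLittleO :
    (fun t : ℝ => Real.sinh t - (t + t^3/6)) =o[nhds 0] fun t => t^4 := by
  have hb : (fun t : ℝ => Real.sinh t - (t + t^3/6)) =O[nhds 0] fun t => t^5 := by
    rw [isBigO_iff]
    refine ⟨1, ?_⟩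
    have h1 : ∀ᶠ t : ℝ in nhds 0, |t| ≤ 1 := by
      filter_upwards [Metric.ball_mem_nhds (0:ℝ) one_pos] with t ht
      rw [Metric.mem_ball, Real.dist_eq, sub_zero] at ht
      exact ht.le
    filter_upwards [h1] with t ht
    simpa [Real.norm_eq_abs, abs_pow] using my_sinh_remainder ht
  exact hb.trans_isLittleO (isLittleO_pow_pow (by norm_num))

theorem my_arsinh_isLittleO :
    (fun y : ℝ => Real.arsinh y - (y - y^3/6)) =o[nhds 0] fun y => y^4 := by
  have hb : (fun y : ℝ => Real.arsinh y - (y - y^3/6)) =O[nhds 0] fun y => y^5 := by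
    rw [isBigO_iff]
    refine ⟨3/8, Eventually.of_forall fun y => ?_⟩
    have := my_arsinh_remainder y
    simp only [Real.norm_eq_abs, abs_pow]
    calc |Real.arsinh y - (y - y^3/6)| ≤ (3/8)*|y|^4 * |y| := this
    _ = 3/8 * |y|^5 := by ring
  exact hb.trans_isLittleO (isLittleO_pow_pow (by norm_num))

theorem my_artanh_eq_arsinh {x : ℝ} (hx : 0 ≤ x) :
    _root_.artanh (x / Real.sqrt (1+x^2)) = Real.arsinh x := by
  set w := Real.sqrt (1+x^2) with hw
  have hpos : (0:ℝ) < 1 + x^2 := by positivity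
  have hw2 : w^2 = 1 + x^2 := Real.sq_sqrt hpos.le
  have hwnn : 0 ≤ w := Real.sqrt_nonneg _
  have hw1 : 1 ≤ w := by nlinarith [sq_nonneg x]
  have hwpos : 0 < w := lt_of_lt_of_le one_pos hw1
  have hwx : x < w := by nlinarith
  have hprod : (w - x)*(w + x) = 1 := by nlinarith
  have hwne : w ≠ 0 := ne_of_gt hwpos
  have hne : w - x ≠ 0 := ne_of_gt (by linarith)
  have hd : (0:ℝ) < 1 - x/w := by
    rw [sub_pos, div_lt_one hwpos]; exact hwx
  have e1 : (1 + x/w)/(1 - x/w) = (w+x)/(w-x) := by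
    rw [div_eq_div_iff (ne_of_gt hd) hne]
    field_simp
  have e2 : (w+x)/(w-x) = (w+x)^2 := by
    rw [div_eq_iff hne]
    linear_combination (-(w+x))*hprod
  unfold _root_.artanh Real.arsinh
  rw [e1, e2, Real.log_pow]
  push_cast
  rw [← hw, add_comm x w]
  ring

theorem hyperbolic_squared_distance_expansion
    (u v : EuclideanSpace ℝ (Fin 2)) (hu : ‖u‖ = 1) (hv : ‖v‖ = 1)
    (φ : ℝ) (huv : ⟪u, v⟫_ℝ = ‖u‖ * ‖v‖ * Real.cos φ)
    (a b : ℝ) (hab : a = ‖u‖) (hbb : b = ‖v‖)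
    (D d : ℝ → ℝ)
    (hD : ∀ t, D t = 1 + Real.cosh (t * a) * Real.cosh (t * b)
            - Real.sinh (t * a) * Real.sinh (t * b) * Real.cos φ)
    (hd : ∀ t, d t = 2 * _root_.artanh (Real.sqrt (1 - 2 / D t))) :
    (fun t => d t ^ 2
        - (t ^ 2 * (a ^ 2 + b ^ 2 - 2 * a * b * Real.cos φ)
          + (1 / 3) * t ^ 4 * a ^ 2 * b ^ 2 * Real.sin φ ^ 2))
      =o[nhds 0] fun t => t ^ 4 := by
  have ha1 : a = 1 := hab.trans hu
  have hb1 : b = 1 := hbb.trans hv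
  subst ha1; subst hb1
  set s := Real.sin (φ/2) with hs
  -- trigonometric identities
  have hpyth : Real.sin (φ/2)^2 + Real.cos (φ/2)^2 = 1 := Real.sin_sq_add_cos_sq _
  have hcosφ : Real.cos φ = 1 - 2*s^2 := by
    have h := Real.cos_two_mul (φ/2)
    rw [show 2*(φ/2) = φ by ring] at h
    rw [h, hs]; linarith
  have hsinφ : Real.sin φ ^ 2 = 4*s^2*(1-s^2) := by
    have h := Real.sin_two_mul (φ/2)
    rw [show 2*(φ/2) = φ by ring] at h
    rw [h, hs]
    linear_combination (4*Real.sin (φ/2)^2)*hpyth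
  -- the closed form for d²
  have hd2 : ∀ t, d t ^ 2 = 4 * (Real.arsinh (s * Real.sinh t))^2 := by
    intro t
    set m := s * Real.sinh t with hm
    have hDt : D t = 2*(1+m^2) := by
      rw [hD t, mul_one, hcosφ, hm]
      linear_combination Real.cosh_sq t
    have hDpos : (0:ℝ) < 1 + m^2 := by positivity
    have hfrac : 1 - 2 / D t = m^2/(1+m^2) := by
      rw [hDt]; field_simp; ring
    have hsqrt : Real.sqrt (1 - 2 / D t) = |m| / Real.sqrt (1+|m|^2) := by
      rw [hfrac, Real.sqrt_div (sq_nonneg m), Real.sqrt_sq_eq_abs, sq_abs]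
    have hda : d t = 2 * Real.arsinh |m| := by
      rw [hd t, hsqrt, my_artanh_eq_arsinh (abs_nonneg m)]
    rw [hda]
    rcases abs_choice m with h | h
    · rw [h]; ring
    · rw [h, Real.arsinh_neg]; ring
  -- asymptotics
  have hmt : Tendsto (fun t : ℝ => s * Real.sinh t) (nhds 0) (nhds 0) := by
    have := (Real.continuous_sinh.tendsto 0).const_mul s
    simpa using this
  have hsinO : (fun t : ℝ => Real.sinh t) =O[nhds 0] fun t => t := by
    have := (Real.hasDerivAt_sinh 0).hasFDerivAt.isBigO_sub
    simpa using this
  have hcomp : (fun t : ℝ => Real.arsinh (s*Real.sinh t)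
      - (s*Real.sinh t - (s*Real.sinh t)^3/6)) =o[nhds 0] fun t => t^4 := by
    have h1 := my_arsinh_isLittleO.comp_tendsto hmt
    have h2 : (fun t : ℝ => (s*Real.sinh t)^4) =O[nhds 0] fun t => t^4 := by
      have := (hsinO.pow 4).const_mul_left (s^4)
      refine this.congr_left fun t => ?_
      ring
    exact (h1.trans_isBigO h2)
  have hst : (fun t : ℝ => Real.sinh t - t) =O[nhds 0] fun t => t^3 := by
    have heq : (fun t : ℝ => Real.sinh t - t)
        = fun t => (Real.sinh t - (t + t^3/6)) + t^3/6 := by funext t; ring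
    rw [heq]
    exact (my_sinh_isLittleO.isBigO.trans
        (isLittleO_pow_pow (by norm_num : 3 < 4)).isBigO).add
      (((isBigO_refl (fun t : ℝ => t^3) (nhds 0)).const_mul_left (1/6)).congr_left
        fun t => by ring)
  have hcube : (fun t : ℝ => Real.sinh t^3 - t^3) =o[nhds 0] fun t => t^4 := by
    have hquad : (fun t : ℝ => Real.sinh t^2 + t*Real.sinh t + t^2) =O[nhds 0]
        fun t => t^2 := by
      have q1 : (fun t : ℝ => Real.sinh t^2) =O[nhds 0] fun t => t^2 := by
        have := hsinO.pow 2
        exact this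
      have q2 : (fun t : ℝ => t*Real.sinh t) =O[nhds 0] fun t => t^2 := by
        have := (isBigO_refl (fun t : ℝ => t) (nhds 0)).mul hsinO
        refine this.trans (IsBigO.of_bound 1 ?_)
        filter_upwards with t
        simp [sq, abs_mul]
      exact (q1.add q2).add (isBigO_refl _ _)
    have hmul := hst.mul hquad
    have heq : (fun t : ℝ => (Real.sinh t - t) * (Real.sinh t^2 + t*Real.sinh t + t^2))
        = fun t => Real.sinh t^3 - t^3 := by funext t; ring
    rw [heq] at hmul
    have heq2 : (fun t : ℝ => t^3 * t^2) = fun t => t^5 := by funext t; ring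
    rw [heq2] at hmul
    exact hmul.trans_isLittleO (isLittleO_pow_pow (by norm_num : 4 < 5))
  -- expansion of G
  have hG : (fun t : ℝ => Real.arsinh (s * Real.sinh t)
      - (s*t + s*(1-s^2)/6*t^3)) =o[nhds 0] fun t => t^4 := by
    have hB := my_sinh_isLittleO.const_mul_left s
    have hC := hcube.const_mul_left (s^3/6)
    have := (hcomp.add hB).sub hC
    refine this.congr_left fun t => ?_
    ring
  -- G and p are O(t)
  have htO : ∀ n : ℕ, 1 ≤ n → (fun t : ℝ => t^n) =O[nhds 0] fun t => t := by
    intro n hn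
    rcases Nat.eq_or_lt_of_le hn with h | h
    · refine (isBigO_refl _ _).congr_left fun t => by rw [← h, pow_one]
    · exact ((isLittleO_pow_pow h).isBigO).congr_right fun t => pow_one t
  have hpO : (fun t : ℝ => s*t + s*(1-s^2)/6*t^3) =O[nhds 0] fun t => t := by
    refine (((isBigO_refl (fun t : ℝ => t) (nhds 0)).const_mul_left s).congr_left
      (fun t => rfl)).add ?_
    exact ((htO 3 (by norm_num)).const_mul_left (s*(1-s^2)/6))
  have hGO : (fun t : ℝ => Real.arsinh (s * Real.sinh t)) =O[nhds 0] fun t => t := by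
    have h1 : (fun t : ℝ => Real.arsinh (s * Real.sinh t))
        = fun t => (Real.arsinh (s * Real.sinh t) - (s*t + s*(1-s^2)/6*t^3))
          + (s*t + s*(1-s^2)/6*t^3) := by funext t; ring
    rw [h1]
    exact ((hG.isBigO.trans (htO 4 (by norm_num))).add hpO)
  -- squares
  have hsq : (fun t : ℝ => (Real.arsinh (s * Real.sinh t))^2
      - (s*t + s*(1-s^2)/6*t^3)^2) =o[nhds 0] fun t => t^4 := by
    have hmul := hG.mul_isBigO (hGO.add hpO)
    have heq : (fun t : ℝ => (Real.arsinh (s * Real.sinh t) - (s*t + s*(1-s^2)/6*t^3))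
        * (Real.arsinh (s * Real.sinh t) + (s*t + s*(1-s^2)/6*t^3)))
        = fun t => (Real.arsinh (s * Real.sinh t))^2 - (s*t + s*(1-s^2)/6*t^3)^2 := by
      funext t; ring
    rw [heq] at hmul
    refine hmul.trans_isBigO ?_
    have : (fun t : ℝ => t^4 * t) = fun t => t^5 := by funext t; ring
    rw [this]
    exact (isLittleO_pow_pow (by norm_num : 4 < 5)).isBigO
  -- assemble
  have hfin := (hsq.const_mul_left 4).add
    (((isLittleO_pow_pow (by norm_num : 4 < 6)).const_mul_left
      (4*(s*(1-s^2)/6)^2)) : (fun t : ℝ => 4*(s*(1-s^2)/6)^2 * t^6) =o[nhds 0] fun t => t^4)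
  refine hfin.congr_left fun t => ?_
  rw [hd2 t, hcosφ, hsinφ]
  ring
end

section
/- The squared spherical distance admits the second-order expansion: for a, b ≥ 0, φ ∈ ℝ, and d(t) = arccos(cos(ta)·cos(tb) + sin(ta)·sin(tb)·cos φ), one has d(t)² = t²(a² + b² − 2ab cos φ) − (1/3)·t⁴·a²b²·sin²φ + o(t⁴) as t → 0⁺. -/
open Real Filter Asymptotics Topology

private lemma IpowsAux : (Complex.I^2 = -1) ∧ (Complex.I^3 = -Complex.I) ∧
    (Complex.I^4 = 1) ∧ (Complex.I^5 = Complex.I) := by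
  refine ⟨Complex.I_sq, ?_, ?_, ?_⟩ <;> norm_num [pow_succ, Complex.I_sq] <;> ring

private lemma sum6Aux (x : ℝ) : (∑ m ∈ Finset.range 6, (x*Complex.I)^m / m.factorial)
    = Complex.mk (1 - x^2/2 + x^4/24) (x - x^3/6 + x^5/120) := by
  obtain ⟨h2, h3, h4, h5⟩ := IpowsAux
  simp [Finset.sum_range_succ, Complex.ext_iff, Complex.div_re, Complex.div_im, mul_pow,
    h2, h3, h4, h5, Nat.factorial, ← Complex.ofReal_pow]
  norm_num
  constructor <;> ring

private lemma cos6 {x : ℝ} (hx : |x| ≤ 1) : |Real.cos x - (1 - x^2/2 + x^4/24)| ≤ |x|^6 := by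
  have h := Complex.exp_bound (x := x * Complex.I) (by simpa) (n := 6) (by norm_num)
  have hre : Real.cos x - (1 - x^2/2 + x^4/24)
      = (Complex.exp (x*Complex.I) - ∑ m ∈ Finset.range 6, (x*Complex.I)^m / m.factorial).re := by
    rw [sum6Aux]
    simp [Complex.exp_ofReal_mul_I_re]
  rw [hre]
  refine (Complex.abs_re_le_norm _).trans (h.trans ?_)
  have habs : ‖x * Complex.I‖ = |x| := by simp
  rw [habs]
  have hc : ((Nat.succ 6 : ℕ):ℝ) * (((Nat.factorial 6 : ℕ):ℝ) * ((6:ℕ):ℝ))⁻¹ = 7/4320 := by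
    norm_num [Nat.factorial]
  rw [hc]
  nlinarith [pow_nonneg (abs_nonneg x) 6]

private lemma sin6 {x : ℝ} (hx : |x| ≤ 1) : |Real.sin x - (x - x^3/6)| ≤ 2*|x|^5 := by
  have h := Complex.exp_bound (x := x * Complex.I) (by simpa) (n := 6) (by norm_num)
  have him : Real.sin x - (x - x^3/6 + x^5/120)
      = (Complex.exp (x*Complex.I) - ∑ m ∈ Finset.range 6, (x*Complex.I)^m / m.factorial).im := by
    rw [sum6Aux]
    simp [Complex.exp_ofReal_mul_I_im]
  have h1 : |Real.sin x - (x - x^3/6 + x^5/120)| ≤ |x|^6 := by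
    rw [him]
    refine (Complex.abs_im_le_norm _).trans (h.trans ?_)
    have habs : ‖x * Complex.I‖ = |x| := by simp
    rw [habs]
    have hc : ((Nat.succ 6 : ℕ):ℝ) * (((Nat.factorial 6 : ℕ):ℝ) * ((6:ℕ):ℝ))⁻¹ = 7/4320 := by
      norm_num [Nat.factorial]
    rw [hc]
    nlinarith [pow_nonneg (abs_nonneg x) 6]
  have h2 : |x|^6 ≤ |x|^5 := by
    calc |x|^6 = |x|^5 * |x| := by ring
    _ ≤ |x|^5 * 1 := by gcongr
    _ = |x|^5 := by ring
  have h3 : |x^5/120| ≤ |x|^5 := by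
    rw [abs_div, abs_pow]
    have := pow_nonneg (abs_nonneg x) 5
    rw [abs_of_nonneg (by norm_num : (0:ℝ) ≤ 120)]
    linarith
  calc |Real.sin x - (x - x^3/6)| = |(Real.sin x - (x - x^3/6 + x^5/120)) + x^5/120| := by ring_nf
    _ ≤ |Real.sin x - (x - x^3/6 + x^5/120)| + |x^5/120| := abs_add_le _ _
    _ ≤ 2*|x|^5 := by linarith

private lemma Fbound {θ : ℝ} (h : |θ| ≤ 1) :
    |θ^2 - 2*(1 - Real.cos θ) - (1 - Real.cos θ)^2/3| ≤ 4*θ^6 := by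
  have hδ' := cos6 h
  obtain ⟨δ, hδdef⟩ : ∃ δ, Real.cos θ = 1 - θ^2/2 + θ^4/24 + δ :=
    ⟨Real.cos θ - (1 - θ^2/2 + θ^4/24), by ring⟩
  have h6 : |θ|^6 = θ^6 := by rw [pow_abs, abs_of_nonneg (by positivity)]
  rw [h6] at hδ'
  have hδ'' : |δ| ≤ θ^6 := by
    have : δ = Real.cos θ - (1 - θ^2/2 + θ^4/24) := by linarith [hδdef]
    rw [this]; exact hδ'
  rw [abs_le] at hδ''
  obtain ⟨hδ1, hδ2⟩ := hδ''
  have ht2 : θ^2 ≤ 1 := by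
    nlinarith [mul_nonneg (sub_nonneg.2 h) (by positivity : (0:ℝ) ≤ 1 + |θ|), sq_abs θ]
  have h6n : (0:ℝ) ≤ θ^6 := by positivity
  have h2n : (0:ℝ) ≤ θ^2 := by positivity
  have h4n : (0:ℝ) ≤ θ^4 := by positivity
  have h8n : (0:ℝ) ≤ θ^8 := by positivity
  have h61 : θ^6 ≤ 1 := by nlinarith [h2n, h6n]
  have p1 : 0 ≤ (θ^6 - δ)*θ^2 := mul_nonneg (by linarith) h2n
  have p2 : 0 ≤ (θ^6 + δ)*θ^2 := mul_nonneg (by linarith) h2n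
  have p3 : 0 ≤ (θ^6 - δ)*θ^4 := mul_nonneg (by linarith) h4n
  have p4 : 0 ≤ (θ^6 + δ)*θ^4 := mul_nonneg (by linarith) h4n
  have p5 : δ^2 ≤ θ^6 := by nlinarith [sq_nonneg δ, h61, h6n]
  have p7 : θ^8 ≤ θ^6 := by nlinarith [mul_nonneg h6n (sub_nonneg.2 ht2)]
  have p8 : θ^10 ≤ θ^6 := by
    nlinarith [mul_nonneg h6n (sub_nonneg.2 ht2), mul_nonneg h6n h2n, p7,
      mul_nonneg (sub_nonneg.2 p7) h2n]
  rw [hδdef, abs_le]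
  constructor <;> nlinarith [p1, p2, p3, p4, p5, p7, p8, hδ1, hδ2, sq_nonneg δ, h8n]

private lemma cosExp (c : ℝ) :
    (fun t : ℝ => Real.cos (t*c) - (1 - (t*c)^2/2 + (t*c)^4/24)) =o[𝓝 0] fun t => t^4 := by
  have hO : (fun t : ℝ => Real.cos (t*c) - (1 - (t*c)^2/2 + (t*c)^4/24)) =O[𝓝 0]
      fun t => t^6 := by
    rw [isBigO_iff]
    refine ⟨(|c|+1)^6, ?_⟩
    have hε : (0:ℝ) < 1/(|c|+1) := by positivity
    filter_upwards [eventually_abs_sub_lt (0:ℝ) hε] with t ht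
    rw [sub_zero] at ht
    have h1 : |t*c| ≤ 1 := by
      rw [abs_mul]
      calc |t| * |c| ≤ (1/(|c|+1))*(|c|+1) := by
            apply mul_le_mul ht.le (by linarith [abs_nonneg c]) (abs_nonneg c) hε.le
        _ = 1 := by field_simp
    have h2 := cos6 h1
    rw [Real.norm_eq_abs, Real.norm_eq_abs]
    calc |Real.cos (t*c) - (1 - (t*c)^2/2 + (t*c)^4/24)| ≤ |t*c|^6 := h2
      _ = |t|^6 * |c|^6 := by rw [abs_mul, mul_pow]
      _ ≤ |t|^6 * (|c|+1)^6 := by gcongr; linarith [abs_nonneg c]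
      _ = (|c|+1)^6 * |t^6| := by rw [← pow_abs]; ring
  exact hO.trans_isLittleO (isLittleO_pow_pow (by norm_num))

private lemma sinExp (c : ℝ) :
    (fun t : ℝ => Real.sin (t*c) - (t*c - (t*c)^3/6)) =o[𝓝 0] fun t => t^4 := by
  have hO : (fun t : ℝ => Real.sin (t*c) - (t*c - (t*c)^3/6)) =O[𝓝 0] fun t => t^5 := by
    rw [isBigO_iff]
    refine ⟨2*(|c|+1)^5, ?_⟩
    have hε : (0:ℝ) < 1/(|c|+1) := by positivity
    filter_upwards [eventually_abs_sub_lt (0:ℝ) hε] with t ht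
    rw [sub_zero] at ht
    have h1 : |t*c| ≤ 1 := by
      rw [abs_mul]
      calc |t| * |c| ≤ (1/(|c|+1))*(|c|+1) := by
            apply mul_le_mul ht.le (by linarith [abs_nonneg c]) (abs_nonneg c) hε.le
        _ = 1 := by field_simp
    have h2 := sin6 h1
    rw [Real.norm_eq_abs, Real.norm_eq_abs]
    calc |Real.sin (t*c) - (t*c - (t*c)^3/6)| ≤ 2*|t*c|^5 := h2
      _ = 2*(|t|^5 * |c|^5) := by rw [abs_mul, mul_pow]
      _ ≤ 2*(|t|^5 * (|c|+1)^5) := by gcongr; linarith [abs_nonneg c]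
      _ = 2*(|c|+1)^5 * |t^5| := by rw [← pow_abs]; ring
  exact hO.trans_isLittleO (isLittleO_pow_pow (by norm_num))

/-- one minus cosine is at most half the square. -/
private lemma oscAux (x : ℝ) : 1 - Real.cos x ≤ x^2/2 := by
  have h2 := Real.cos_sq (x/2)
  rw [show 2*(x/2) = x by ring] at h2
  have h1 : Real.sin (x/2)^2 = 1/2 - Real.cos x/2 := by
    rw [Real.sin_sq, h2]; ring
  have h3 : |Real.sin (x/2)| ≤ |x/2| := Real.abs_sin_le_abs
  have h4 : Real.sin (x/2)^2 ≤ (x/2)^2 := by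
    nlinarith [sq_abs (Real.sin (x/2)), sq_abs (x/2), abs_nonneg (Real.sin (x/2)),
      abs_nonneg (x/2), mul_self_le_mul_self (abs_nonneg (Real.sin (x/2))) h3]
  nlinarith [h1, h4]

/-- convenient big-O one lemma -/
private lemma bigO_one {f : ℝ → ℝ} (hf : Continuous f) :
    f =O[𝓝 (0:ℝ)] (fun _ => (1:ℝ)) :=
  (hf.tendsto 0).isBigO_one ℝ

private lemma pow6_mul_littleO {g : ℝ → ℝ} (hg : Continuous g) :
    (fun t : ℝ => t^6 * g t) =o[𝓝 0] fun t => t^4 := by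
  have h1 : (fun t : ℝ => t^6) =o[𝓝 (0:ℝ)] fun t => t^4 := isLittleO_pow_pow (by norm_num)
  have h2 := h1.mul_isBigO (bigO_one hg)
  refine h2.congr' (by rfl) ?_
  filter_upwards [] with t
  simp

theorem spherical_squared_distance_expansion
    (a b φ : ℝ) (ha : 0 ≤ a) (hb : 0 ≤ b)
    (d : ℝ → ℝ)
    (hd : ∀ t, d t = Real.arccos (Real.cos (t * a) * Real.cos (t * b)
            + Real.sin (t * a) * Real.sin (t * b) * Real.cos φ)) :
    (fun t => d t ^ 2
        - (t ^ 2 * (a ^ 2 + b ^ 2 - 2 * a * b * Real.cos φ)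
          - (1 / 3) * t ^ 4 * a ^ 2 * b ^ 2 * Real.sin φ ^ 2))
      =o[nhdsWithin 0 (Set.Ioi 0)] fun t => t ^ 4 := by
  set Q : ℝ := a^2 + b^2 - 2*a*b*Real.cos φ with hQdef
  set S4 : ℝ := a^4 + b^4 + 6*a^2*b^2 - 4*a*b*(a^2+b^2)*Real.cos φ with hS4def
  set C : ℝ → ℝ := fun t => Real.cos (t*a) * Real.cos (t*b)
      + Real.sin (t*a) * Real.sin (t*b) * Real.cos φ with hCdef
  set P : ℝ → ℝ := fun t => t^2*Q/2 - t^4*S4/24 with hPdef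
  have hCont : Continuous C := by
    rw [hCdef]; fun_prop
  -- representation as convex combination
  have hCrep : ∀ t, C t = (1+Real.cos φ)/2 * Real.cos (t*a - t*b)
      + (1-Real.cos φ)/2 * Real.cos (t*a + t*b) := by
    intro t
    rw [hCdef]
    simp only
    rw [Real.cos_sub, Real.cos_add]
    ring
  have hφ1 : -1 ≤ Real.cos φ := Real.neg_one_le_cos φ
  have hφ2 : Real.cos φ ≤ 1 := Real.cos_le_one φ
  have hC1 : ∀ t, -1 ≤ C t := by
    intro t
    rw [hCrep t]
    nlinarith [Real.neg_one_le_cos (t*a - t*b), Real.neg_one_le_cos (t*a + t*b),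
      Real.cos_le_one (t*a - t*b), Real.cos_le_one (t*a + t*b),
      mul_nonneg (by linarith : (0:ℝ) ≤ 1 + Real.cos φ)
        (by linarith [Real.neg_one_le_cos (t*a - t*b)] : (0:ℝ) ≤ 1 + Real.cos (t*a - t*b)),
      mul_nonneg (by linarith : (0:ℝ) ≤ 1 - Real.cos φ)
        (by linarith [Real.neg_one_le_cos (t*a + t*b)] : (0:ℝ) ≤ 1 + Real.cos (t*a + t*b))]
  have hC2 : ∀ t, C t ≤ 1 := by
    intro t
    rw [hCrep t]
    nlinarith [mul_nonneg (by linarith : (0:ℝ) ≤ 1 + Real.cos φ)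
        (by linarith [Real.cos_le_one (t*a - t*b)] : (0:ℝ) ≤ 1 - Real.cos (t*a - t*b)),
      mul_nonneg (by linarith : (0:ℝ) ≤ 1 - Real.cos φ)
        (by linarith [Real.cos_le_one (t*a + t*b)] : (0:ℝ) ≤ 1 - Real.cos (t*a + t*b))]
  have hdC : ∀ t, Real.cos (d t) = C t := by
    intro t
    rw [hd t]
    exact Real.cos_arccos (hC1 t) (hC2 t)
  have hd0 : ∀ t, 0 ≤ d t := by
    intro t; rw [hd t]; exact Real.arccos_nonneg _
  have hdπ : ∀ t, d t ≤ π := by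
    intro t; rw [hd t]; exact Real.arccos_le_pi _
  -- upper bound on 1 - C t
  have hub : ∀ t, 1 - C t ≤ t^2*(a+b)^2/2 := by
    intro t
    rw [hCrep t]
    have o1 := oscAux (t*a - t*b)
    have o2 := oscAux (t*a + t*b)
    nlinarith [o1, o2, mul_nonneg (mul_nonneg (by linarith : (0:ℝ) ≤ 1 + Real.cos φ)
        (sq_nonneg t)) (mul_nonneg ha hb),
      mul_nonneg (by linarith : (0:ℝ) ≤ 1 + Real.cos φ)
        (by nlinarith [o1] : (0:ℝ) ≤ (t*a - t*b)^2/2 - (1 - Real.cos (t*a - t*b))),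
      mul_nonneg (by linarith : (0:ℝ) ≤ 1 - Real.cos φ)
        (by nlinarith [o2] : (0:ℝ) ≤ (t*a + t*b)^2/2 - (1 - Real.cos (t*a + t*b)))]
  -- lower bound: d t ^ 2 ≤ π^2/2 * (1 - C t)
  have hπ := Real.pi_pos
  have hlow : ∀ t, (d t)^2 ≤ π^2/2 * (1 - C t) := by
    intro t
    have h2 := Real.cos_sq (d t/2)
    rw [show 2*(d t/2) = d t by ring] at h2
    have hs2 : Real.sin (d t/2)^2 = (1 - C t)/2 := by
      rw [Real.sin_sq, h2, hdC t]; ring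
    have hsin := Real.mul_le_sin (x := d t/2) (by linarith [hd0 t]) (by linarith [hdπ t])
    have hdiv : d t / π ≤ Real.sin (d t/2) := by
      calc d t / π = 2/π * (d t/2) := by ring
        _ ≤ Real.sin (d t/2) := hsin
    have hkey : d t ≤ Real.sin (d t/2) * π := (div_le_iff₀ hπ).mp hdiv
    calc (d t)^2 ≤ (Real.sin (d t/2) * π)^2 := by
          apply pow_le_pow_left₀ (hd0 t) hkey
      _ = π^2 * Real.sin (d t/2)^2 := by ring
      _ = π^2 * ((1 - C t)/2) := by rw [hs2]
      _ = π^2/2 * (1 - C t) := by ring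
  -- combined bound
  have hdub : ∀ t, (d t)^2 ≤ t^2 * (π^2*(a+b)^2/4) := by
    intro t
    calc (d t)^2 ≤ π^2/2 * (1 - C t) := hlow t
      _ ≤ π^2/2 * (t^2*(a+b)^2/2) := by
          apply mul_le_mul_of_nonneg_left (hub t) (by positivity)
      _ = t^2 * (π^2*(a+b)^2/4) := by ring
  -- F part is o(t^4)
  have hFo : (fun t => (d t)^2 - 2*(1 - C t) - (1 - C t)^2/3) =o[𝓝 (0:ℝ)]
      fun t => t^4 := by
    have hO : (fun t => (d t)^2 - 2*(1 - C t) - (1 - C t)^2/3) =O[𝓝 (0:ℝ)]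
        fun t => t^6 := by
      rw [isBigO_iff]
      refine ⟨4*(π^2*(a+b)^2/4)^3, ?_⟩
      have htend : Filter.Tendsto (fun t : ℝ => t^2 * (π^2*(a+b)^2/4)) (𝓝 0) (𝓝 0) := by
        have : Continuous fun t : ℝ => t^2 * (π^2*(a+b)^2/4) := by fun_prop
        have h0 := this.tendsto 0
        simpa using h0
      filter_upwards [htend.eventually_le_const one_pos] with t ht
      have hsq : (d t)^2 ≤ 1 := le_trans (hdub t) ht
      have habs : |d t| ≤ 1 := by
        rw [← abs_one]
        apply abs_le_abs (by nlinarith [hd0 t]) (by nlinarith [hd0 t])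
      have hFb := Fbound habs
      rw [hdC t] at hFb
      rw [Real.norm_eq_abs, Real.norm_eq_abs]
      calc |(d t)^2 - 2*(1 - C t) - (1 - C t)^2/3| ≤ 4*(d t)^6 := hFb
        _ = 4*((d t)^2)^3 := by ring
        _ ≤ 4*(t^2 * (π^2*(a+b)^2/4))^3 := by
            have := pow_le_pow_left₀ (sq_nonneg (d t)) (hdub t) 3
            linarith
        _ = 4*(π^2*(a+b)^2/4)^3 * (t^2)^3 := by ring
        _ = 4*(π^2*(a+b)^2/4)^3 * |t^6| := by
            rw [abs_of_nonneg (by positivity : (0:ℝ) ≤ t^6)]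
            ring
    exact hO.trans_isLittleO (isLittleO_pow_pow (by norm_num))
  -- rho part: u - P = o(t^4)
  have hq1 : (fun t : ℝ => (1 - (t*a)^2/2 + (t*a)^4/24)
      * (Real.cos (t*b) - (1 - (t*b)^2/2 + (t*b)^4/24))) =o[𝓝 (0:ℝ)] fun t => t^4 := by
    have hO : (fun t : ℝ => 1 - (t*a)^2/2 + (t*a)^4/24) =O[𝓝 (0:ℝ)] (fun _ => (1:ℝ)) :=
      bigO_one (by fun_prop)
    have := hO.mul_isLittleO (cosExp b)
    refine this.congr' (by rfl) ?_
    filter_upwards [] with t; simp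
  have hq2 : (fun t : ℝ => (Real.cos (t*a) - (1 - (t*a)^2/2 + (t*a)^4/24))
      * Real.cos (t*b)) =o[𝓝 (0:ℝ)] fun t => t^4 := by
    have hO : (fun t : ℝ => Real.cos (t*b)) =O[𝓝 (0:ℝ)] (fun _ => (1:ℝ)) :=
      bigO_one (by fun_prop)
    have := (cosExp a).mul_isBigO hO
    refine this.congr' (by rfl) ?_
    filter_upwards [] with t; simp
  have hq3 : (fun t : ℝ => ((t*a - (t*a)^3/6) * Real.cos φ)
      * (Real.sin (t*b) - (t*b - (t*b)^3/6))) =o[𝓝 (0:ℝ)] fun t => t^4 := by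
    have hO : (fun t : ℝ => (t*a - (t*a)^3/6) * Real.cos φ) =O[𝓝 (0:ℝ)] (fun _ => (1:ℝ)) :=
      bigO_one (by fun_prop)
    have := hO.mul_isLittleO (sinExp b)
    refine this.congr' (by rfl) ?_
    filter_upwards [] with t; simp
  have hq4 : (fun t : ℝ => (Real.sin (t*a) - (t*a - (t*a)^3/6))
      * (Real.sin (t*b) * Real.cos φ)) =o[𝓝 (0:ℝ)] fun t => t^4 := by
    have hO : (fun t : ℝ => Real.sin (t*b) * Real.cos φ) =O[𝓝 (0:ℝ)] (fun _ => (1:ℝ)) :=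
      bigO_one (by fun_prop)
    have := (sinExp a).mul_isBigO hO
    refine this.congr' (by rfl) ?_
    filter_upwards [] with t; simp
  have hq5 : (fun t : ℝ => t^6 * (a^3*b^3*Real.cos φ/36 - a^2*b^2*(a^2+b^2)/48
      + t^2 * (a^4*b^4/576))) =o[𝓝 (0:ℝ)] fun t => t^4 :=
    pow6_mul_littleO (by fun_prop)
  have hρ : (fun t => (1 - C t) - P t) =o[𝓝 (0:ℝ)] fun t => t^4 := by
    have hdecomp : (fun t => (1 - C t) - P t) = fun t : ℝ =>
        -((1 - (t*a)^2/2 + (t*a)^4/24) * (Real.cos (t*b) - (1 - (t*b)^2/2 + (t*b)^4/24)))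
        - (Real.cos (t*a) - (1 - (t*a)^2/2 + (t*a)^4/24)) * Real.cos (t*b)
        - ((t*a - (t*a)^3/6) * Real.cos φ) * (Real.sin (t*b) - (t*b - (t*b)^3/6))
        - (Real.sin (t*a) - (t*a - (t*a)^3/6)) * (Real.sin (t*b) * Real.cos φ)
        - t^6 * (a^3*b^3*Real.cos φ/36 - a^2*b^2*(a^2+b^2)/48 + t^2 * (a^4*b^4/576)) := by
      funext t
      rw [hCdef, hPdef, hQdef, hS4def]
      simp only
      ring
    rw [hdecomp]
    exact ((((hq1.neg_left.sub hq2).sub hq3).sub hq4).sub hq5)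
  -- product part
  have hmul : (fun t => ((1 - C t) + P t)/3 * ((1 - C t) - P t)) =o[𝓝 (0:ℝ)]
      fun t => t^4 := by
    have hO : (fun t => ((1 - C t) + P t)/3) =O[𝓝 (0:ℝ)] (fun _ => (1:ℝ)) := by
      apply bigO_one
      rw [hPdef]
      fun_prop
    have := hO.mul_isLittleO hρ
    refine this.congr' (by rfl) ?_
    filter_upwards [] with t; simp
  have hq6 : (fun t : ℝ => t^6 * (-(Q*S4)/72 + t^2*(S4^2/1728))) =o[𝓝 (0:ℝ)]
      fun t => t^4 :=
    pow6_mul_littleO (by fun_prop)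
  -- algebraic identity
  have hQR : Q^2/12 - S4/12 + a^2*b^2*Real.sin φ^2/3 = 0 := by
    rw [hQdef, hS4def, Real.sin_sq]
    ring
  -- final assembly
  have heq : (fun t => d t ^ 2
        - (t ^ 2 * (a ^ 2 + b ^ 2 - 2 * a * b * Real.cos φ)
          - (1 / 3) * t ^ 4 * a ^ 2 * b ^ 2 * Real.sin φ ^ 2))
      = fun t => ((d t)^2 - 2*(1 - C t) - (1 - C t)^2/3)
        + 2*((1 - C t) - P t)
        + ((1 - C t) + P t)/3 * ((1 - C t) - P t)
        + t^6 * (-(Q*S4)/72 + t^2*(S4^2/1728)) := by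
    funext t
    rw [hPdef]
    simp only
    rw [hQdef, hS4def]
    linear_combination (t^4) * hQR
  have main : (fun t => d t ^ 2
        - (t ^ 2 * (a ^ 2 + b ^ 2 - 2 * a * b * Real.cos φ)
          - (1 / 3) * t ^ 4 * a ^ 2 * b ^ 2 * Real.sin φ ^ 2))
      =o[𝓝 (0:ℝ)] fun t => t^4 := by
    rw [heq]
    exact ((hFo.add (hρ.const_mul_left 2)).add hmul).add hq6
  exact main.mono nhdsWithin_le_nhds
end
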